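/- The infinite product ∏_{n=1}^{∞} (1 − 1/(2n·(4n−1)))^{−1} converges and equals ϖ/2, where ϖ is the lemniscate constant. -/

import Mathlib

open Set MeasureTheory Filter

/-- Generalized arcsine: `arcsin_{p,q}(x) = ∫₀ˣ (1 - tᵠ)^(-1/p) dt`. -/
noncomputable def gArcsin (p q x : ℝ) : ℝ := ∫ t in (0:ℝ)..x, (1 - t ^ q) ^ (-(1 / p))

/-- Generalized pi: `π_{p,q} = 2 ∫₀¹ (1 - tᵠ)^(-1/p) dt`. -/
noncomputable def gPi (p q : ℝ) : ℝ := 2 * gArcsin p q 1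

/-- `S` is the generalized sine `sin_{p,q}` (the inverse of `gArcsin p q` on `[0,1]`). -/
def IsGSin (p q : ℝ) (S : ℝ → ℝ) : Prop :=
  ∀ y ∈ Icc (0:ℝ) 1, S (gArcsin p q y) = y

/-- `C` is the generalized cosine `cos_{p,q}`, the derivative of `S = sin_{p,q}`
on `[0, π_{p,q}/2]`. -/
def IsGCos (p q : ℝ) (S C : ℝ → ℝ) : Prop :=
  ∀ x ∈ Icc (0:ℝ) (gPi p q / 2), HasDerivWithinAt S (C x) (Icc (0:ℝ) (gPi p q / 2)) x

section
open Finset intervalIntegral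

lemma lemni_range_lemni_prod_eq (N : ℕ) (s : ℝ) :
    ∏ j ∈ Finset.range (N+1), (s + (j:ℝ)) = s * ∏ n ∈ Finset.Icc 1 N, (s + (n:ℝ)) := by
  rw [Finset.prod_range_succ' (fun j => s + (j:ℝ)) N]
  rw [← Finset.Ico_add_one_right_eq_Icc, Finset.prod_Ico_eq_prod_range]
  simp only [Nat.cast_zero, add_zero, Nat.add_sub_cancel]
  rw [mul_comm]
  congr 1
  apply Finset.prod_congr rfl
  intro i _
  push_cast
  ring

lemma lemni_fact_eq (N : ℕ) : ((N.factorial : ℕ) : ℝ) = ∏ n ∈ Finset.Icc 1 N, (n:ℝ) := by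
  rw [← Finset.prod_range_add_one_eq_factorial]
  rw [← Finset.Ico_add_one_right_eq_Icc, Finset.prod_Ico_eq_prod_range]
  push_cast
  simp [add_comm]

lemma lemni_alg (x1 x2 x3 A B C D : ℝ) (hA : A ≠ 0) (hB : B ≠ 0) (hC : C ≠ 0) (hD : D ≠ 0)
    (hx3 : x3 ≠ 0) (hxx : x1 * x2 = x3) :
    D * C / (A * B) = 2⁻¹ * (x1 * D / (-(1/2) * A)) * (x2 * D / ((1/4) * B)) / (x3 * D / (-(1/4) * C)) := by
  have hx1 : x1 ≠ 0 := fun h => hx3 (by rw [← hxx, h, zero_mul])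
  have hx2 : x2 ≠ 0 := fun h => hx3 (by rw [← hxx, h, mul_zero])
  rw [← hxx]
  field_simp

lemma lemni_prod_eq (N : ℕ) (hN : 1 ≤ N) :
    ∏ n ∈ Finset.Icc 1 N, (1 - 1 / (2 * (n : ℝ) * (4 * (n : ℝ) - 1)))⁻¹
      = 2⁻¹ * Real.GammaSeq (-(1/2)) N * Real.GammaSeq (1/4) N / Real.GammaSeq (-(1/4)) N := by
  have hNpos : (0:ℝ) < N := by exact_mod_cast hN
  have hL : ∏ n ∈ Finset.Icc 1 N, (1 - 1 / (2 * (n : ℝ) * (4 * (n : ℝ) - 1)))⁻¹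
      = (((N.factorial : ℕ) : ℝ) * ∏ n ∈ Finset.Icc 1 N, (-(1/4) + (n:ℝ)))
        / ((∏ n ∈ Finset.Icc 1 N, (-(1/2) + (n:ℝ))) * ∏ n ∈ Finset.Icc 1 N, ((1/4) + (n:ℝ))) := by
    rw [lemni_fact_eq, ← Finset.prod_mul_distrib, ← Finset.prod_mul_distrib, ← Finset.prod_div_distrib]
    apply Finset.prod_congr rfl
    intro n hn
    have h1 : (1:ℝ) ≤ (n:ℝ) := by exact_mod_cast (Finset.mem_Icc.mp hn).1
    have h2 : (2 * (n:ℝ) * (4 * (n:ℝ) - 1)) ≠ 0 := by nlinarith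
    have h3 : (-(1/2) + (n:ℝ)) ≠ 0 := by nlinarith
    have h4 : ((1/4) + (n:ℝ)) ≠ 0 := by nlinarith
    have hn0 : (n:ℝ) ≠ 0 := by nlinarith
    have h6 : (-(1/4) + (n:ℝ)) ≠ 0 := by nlinarith
    have e1 : 1 - 1/(2*(n:ℝ)*(4*(n:ℝ)-1)) = ((-(1/2)+(n:ℝ))*((1/4)+(n:ℝ))) / ((n:ℝ)*(-(1/4)+(n:ℝ))) := by
      rw [eq_div_iff (mul_ne_zero hn0 h6)]
      have h7 : 1/(2*(n:ℝ)*(4*(n:ℝ)-1)) * ((n:ℝ)*(-(1/4)+(n:ℝ))) = 1/8 := by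
        rw [div_mul_eq_mul_div, one_mul, div_eq_iff h2]; ring
      linear_combination -h7
    rw [e1, inv_div]
  have hA : (∏ n ∈ Finset.Icc 1 N, (-(1/2) + (n:ℝ))) ≠ 0 :=
    Finset.prod_ne_zero_iff.mpr fun n hn => by
      have h1 : (1:ℝ) ≤ (n:ℝ) := by exact_mod_cast (Finset.mem_Icc.mp hn).1
      nlinarith
  have hB : (∏ n ∈ Finset.Icc 1 N, ((1/4) + (n:ℝ))) ≠ 0 :=
    Finset.prod_ne_zero_iff.mpr fun n hn => by
      have h1 : (1:ℝ) ≤ (n:ℝ) := by exact_mod_cast (Finset.mem_Icc.mp hn).1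
      nlinarith
  have hC : (∏ n ∈ Finset.Icc 1 N, (-(1/4) + (n:ℝ))) ≠ 0 :=
    Finset.prod_ne_zero_iff.mpr fun n hn => by
      have h1 : (1:ℝ) ≤ (n:ℝ) := by exact_mod_cast (Finset.mem_Icc.mp hn).1
      nlinarith
  have hD : ((N.factorial : ℕ) : ℝ) ≠ 0 := by positivity
  have hx3 : (N:ℝ) ^ (-(1/4):ℝ) ≠ 0 := (Real.rpow_pos_of_pos hNpos _).ne'
  have hxx : (N:ℝ) ^ (-(1/2):ℝ) * (N:ℝ) ^ ((1/4):ℝ) = (N:ℝ) ^ (-(1/4):ℝ) := by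
    rw [← Real.rpow_add hNpos]; norm_num
  rw [hL]
  simp only [Real.GammaSeq, lemni_range_lemni_prod_eq]
  exact lemni_alg _ _ _ _ _ _ _ hA hB hC hD hx3 hxx


-- integrability of the real beta integrand
lemma lemni_beta_integrable : IntervalIntegrable (fun x : ℝ => x ^ (-(3/4) : ℝ) * (1 - x) ^ (-(1/2) : ℝ))
    volume 0 1 := by
  have hu : (0:ℝ) < (1/4 : ℝ) := by norm_num
  have h := Complex.betaIntegral_convergent (u := ((1/4:ℝ):ℂ)) (v := ((1/2:ℝ):ℂ))
      (by norm_num) (by norm_num)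
  have h2 : IntervalIntegrable
      (fun x : ℝ => Complex.re ((x:ℂ) ^ (((1/4:ℝ):ℂ) - 1) * (1 - (x:ℂ)) ^ (((1/2:ℝ):ℂ) - 1)))
      volume 0 1 := ⟨h.1.re, h.2.re⟩
  apply h2.congr_ae
  refine ae_restrict_of_forall_mem measurableSet_Ioc ?_
  intro x hx
  simp only [min_eq_left, max_eq_right, zero_le_one] at hx
  have hx0 : (0:ℝ) ≤ x := hx.1.le
  have hx1 : (0:ℝ) ≤ 1 - x := by linarith [hx.2]
  have e1 : (((1/4:ℝ):ℂ) - 1) = ((-(3/4):ℝ):ℂ) := by push_cast; ring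
  have e2 : (((1/2:ℝ):ℂ) - 1) = ((-(1/2):ℝ):ℂ) := by push_cast; ring
  simp only [e1, e2]
  rw [show ((1:ℂ) - (x:ℂ)) = ((1 - x : ℝ) : ℂ) by push_cast; ring]
  rw [← Complex.ofReal_cpow hx0, ← Complex.ofReal_cpow hx1, ← Complex.ofReal_mul,
    Complex.ofReal_re]

lemma lemni_beta_value : ∫ x in (0:ℝ)..1, x ^ (-(3/4) : ℝ) * (1 - x) ^ (-(1/2) : ℝ)
    = Real.Gamma (1/4) * Real.Gamma (1/2) / Real.Gamma (3/4) := by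
  have hG := Complex.Gamma_mul_Gamma_eq_betaIntegral (s := ((1/4:ℝ):ℂ)) (t := ((1/2:ℝ):ℂ))
      (by norm_num) (by norm_num)
  have hB : Complex.betaIntegral ((1/4:ℝ):ℂ) ((1/2:ℝ):ℂ)
      = ((∫ x in (0:ℝ)..1, x ^ (-(3/4) : ℝ) * (1 - x) ^ (-(1/2) : ℝ) : ℝ) : ℂ) := by
    rw [Complex.betaIntegral, ← intervalIntegral.integral_ofReal]
    apply intervalIntegral.integral_congr
    intro x hx
    rw [Set.uIcc_of_le (by norm_num : (0:ℝ) ≤ 1)] at hx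
    have hx0 : (0:ℝ) ≤ x := hx.1
    have hx1 : (0:ℝ) ≤ 1 - x := by linarith [hx.2]
    have e1 : (((1/4:ℝ):ℂ) - 1) = ((-(3/4):ℝ):ℂ) := by push_cast; ring
    have e2 : (((1/2:ℝ):ℂ) - 1) = ((-(1/2):ℝ):ℂ) := by push_cast; ring
    simp only [e1, e2]
    rw [show ((1:ℂ) - (x:ℂ)) = ((1 - x : ℝ) : ℂ) by push_cast; ring]
    rw [← Complex.ofReal_cpow hx0, ← Complex.ofReal_cpow hx1, ← Complex.ofReal_mul,
      Complex.ofReal_mul]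
  rw [hB] at hG
  have hsum : (((1/4:ℝ):ℂ) + ((1/2:ℝ):ℂ)) = ((3/4:ℝ):ℂ) := by push_cast; ring
  rw [hsum, Complex.Gamma_ofReal, Complex.Gamma_ofReal, Complex.Gamma_ofReal,
    ← Complex.ofReal_mul, ← Complex.ofReal_mul] at hG
  have := Complex.ofReal_inj.mp hG
  have h34 : Real.Gamma (3/4) ≠ 0 := (Real.Gamma_pos_of_pos (by norm_num)).ne'
  field_simp
  linarith [this]

lemma lemni_integrand_integrable : IntervalIntegrable (fun t : ℝ => (1 - t^(4:ℕ)) ^ (-(1/2):ℝ))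
    volume 0 1 := by
  have h1 : IntervalIntegrable (fun x:ℝ => x ^ (-(1/2):ℝ)) volume 0 1 :=
    intervalIntegral.intervalIntegrable_rpow' (by norm_num)
  have h2 : IntervalIntegrable (fun x:ℝ => (1-x) ^ (-(1/2):ℝ)) volume 0 1 := by
    have := (h1.comp_sub_left 1).symm
    norm_num at this
    exact this
  have h3 : ContinuousOn (fun t:ℝ => (1+t+t^2+t^3) ^ (-(1/2):ℝ)) (Set.uIcc 0 1) := by
    apply ContinuousOn.rpow_const
    · fun_prop
    · intro x hx
      rw [Set.uIcc_of_le (by norm_num : (0:ℝ) ≤ 1)] at hx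
      left
      nlinarith [hx.1, hx.2]
  apply (h2.mul_continuousOn h3).congr_ae
  refine ae_restrict_of_forall_mem measurableSet_Ioc ?_
  intro x hx
  simp only [min_eq_left, max_eq_right, zero_le_one] at hx
  have hx0 : (0:ℝ) < x := hx.1
  have hx1 : (0:ℝ) ≤ 1 - x := by linarith [hx.2]
  have h4 : (0:ℝ) ≤ 1+x+x^2+x^3 := by nlinarith
  simp only
  rw [← Real.mul_rpow hx1 h4]
  ring_nf

lemma lemni_subst_eq : ∫ t in (0:ℝ)..1, (1 - t^(4:ℕ)) ^ (-(1/2):ℝ)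
    = ∫ u in (0:ℝ)..1, (4:ℝ)⁻¹ * (u ^ (-(3/4) : ℝ) * (1 - u) ^ (-(1/2) : ℝ)) := by
  set g : ℝ → ℝ := fun u => (4:ℝ)⁻¹ * (u ^ (-(3/4) : ℝ) * (1 - u) ^ (-(1/2) : ℝ)) with hg
  set f : ℝ → ℝ := fun t => t^(4:ℕ) with hf
  have himage : f '' (Set.uIcc 0 1) ⊆ Set.Icc (0:ℝ) 1 := by
    rw [Set.uIcc_of_le (by norm_num : (0:ℝ) ≤ 1)]
    rintro y ⟨t, ht, rfl⟩
    exact ⟨pow_nonneg ht.1 4, pow_le_one₀ ht.1 ht.2⟩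
  have himage2 : f '' (Set.Ioo 0 1) ⊆ Set.Ioo (0:ℝ) 1 := by
    rintro y ⟨t, ht, rfl⟩
    exact ⟨pow_pos ht.1 4, pow_lt_one₀ ht.1.le ht.2 (by norm_num)⟩
  have hcont : ContinuousOn f (Set.uIcc 0 1) := by fun_prop
  have hderiv : ∀ x ∈ Set.Ioo ((0:ℝ) ⊓ 1) ((0:ℝ) ⊔ 1),
      HasDerivWithinAt f (4 * x^(3:ℕ)) (Set.Ioi x) x := by
    intro x _
    have := (hasDerivAt_pow 4 x).hasDerivWithinAt (s := Set.Ioi x)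
    norm_num at this
    exact this.mono Set.Ioi_subset_Ici_self
  have hgcont : ContinuousOn g (f '' Set.Ioo ((0:ℝ) ⊓ 1) ((0:ℝ) ⊔ 1)) := by
    apply ContinuousOn.mono _ (by simpa using himage2)
    apply ContinuousOn.mul continuousOn_const
    apply ContinuousOn.mul
    · apply ContinuousOn.rpow_const continuousOn_id
      intro x hx; left; exact hx.1.ne'
    · apply ContinuousOn.rpow_const (by fun_prop)
      intro x hx; left
      have := hx.2; intro h; nlinarith [hx.2]
  have hg1 : IntegrableOn g (f '' Set.uIcc 0 1) volume := by
    apply IntegrableOn.mono_set _ himage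
    rw [integrableOn_Icc_iff_integrableOn_Ioc]
    have := (lemni_beta_integrable.const_mul (4:ℝ)⁻¹)
    rw [intervalIntegrable_iff_integrableOn_Ioc_of_le (by norm_num)] at this
    exact this
  have hg2 : IntegrableOn (fun x => (4 * x^(3:ℕ)) • (g ∘ f) x) (Set.uIcc 0 1) volume := by
    rw [Set.uIcc_of_le (by norm_num : (0:ℝ) ≤ 1), integrableOn_Icc_iff_integrableOn_Ioc]
    have hI : IntegrableOn (fun t : ℝ => (1 - t^(4:ℕ)) ^ (-(1/2):ℝ)) (Set.Ioc 0 1) volume := by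
      have := lemni_integrand_integrable
      rwa [intervalIntegrable_iff_integrableOn_Ioc_of_le (by norm_num)] at this
    apply hI.congr_fun _ measurableSet_Ioc
    intro x hx
    have hx0 : (0:ℝ) < x := hx.1
    simp only [hg, hf, Function.comp_apply, smul_eq_mul]
    have e1 : (x^(4:ℕ)) ^ (-(3/4) : ℝ) = x ^ (-(3:ℝ)) := by
      rw [← Real.rpow_natCast x 4, ← Real.rpow_mul hx0.le]
      norm_num
    rw [e1, Real.rpow_neg hx0.le, show (3:ℝ) = ((3:ℕ):ℝ) by norm_num, Real.rpow_natCast]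
    have hx3 : x ^ (3:ℕ) ≠ 0 := by positivity
    field_simp
  have key := intervalIntegral.integral_comp_smul_deriv''' (a := (0:ℝ)) (b := 1)
    hcont hderiv hgcont hg1 hg2
  have hf0 : f 0 = 0 := by simp [hf]
  have hf1 : f 1 = 1 := by simp [hf]
  rw [hf0, hf1] at key
  rw [← key]
  apply intervalIntegral.integral_congr_ae
  refine MeasureTheory.ae_of_all _ ?_
  intro x hx
  rw [Set.uIoc_of_le (by norm_num : (0:ℝ) ≤ 1)] at hx
  have hx0 : (0:ℝ) < x := hx.1
  simp only [hg, hf, Function.comp_apply, smul_eq_mul]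
  have e1 : (x^(4:ℕ)) ^ (-(3/4) : ℝ) = x ^ (-(3:ℝ)) := by
    rw [← Real.rpow_natCast x 4, ← Real.rpow_mul hx0.le]
    norm_num
  rw [e1, Real.rpow_neg hx0.le, show (3:ℝ) = ((3:ℕ):ℝ) by norm_num, Real.rpow_natCast]
  have hx3 : x ^ (3:ℕ) ≠ 0 := by positivity
  field_simp


lemma lemni_gamma_ne : Real.Gamma (-(1/4)) ≠ 0 := by
  apply Real.Gamma_ne_zero
  intro m h
  have hm : ((m:ℝ)) = 1/4 := by linarith [h]
  rcases Nat.eq_zero_or_pos m with h0 | h1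
  · subst h0; norm_num at hm
  · have : (1:ℝ) ≤ (m:ℝ) := by exact_mod_cast h1
    linarith

lemma lemni_gval : 2⁻¹ * Real.Gamma (-(1/2)) * Real.Gamma (1/4) / Real.Gamma (-(1/4))
    = Real.Gamma (1/4) * Real.Gamma (1/2) / Real.Gamma (3/4) / 4 := by
  have h1 : Real.Gamma (1/2) = -(1/2) * Real.Gamma (-(1/2)) := by
    rw [← Real.Gamma_add_one (by norm_num : (-(1/2):ℝ) ≠ 0)]; norm_num
  have h2 : Real.Gamma (3/4) = -(1/4) * Real.Gamma (-(1/4)) := by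
    rw [← Real.Gamma_add_one (by norm_num : (-(1/4):ℝ) ≠ 0)]; norm_num
  have hne := lemni_gamma_ne
  rw [h1, h2]
  field_simp

lemma lemni_gPi_eval : gPi 2 4 / 2
    = 2⁻¹ * Real.Gamma (-(1/2)) * Real.Gamma (1/4) / Real.Gamma (-(1/4)) := by
  have h0 : gPi 2 4 / 2 = gArcsin 2 4 1 := by rw [gPi]; ring
  rw [h0, gArcsin, lemni_gval]
  have h1 : ∫ t in (0:ℝ)..1, (1 - t ^ (4:ℝ)) ^ (-(1 / (2:ℝ)))
      = ∫ t in (0:ℝ)..1, (1 - t^(4:ℕ)) ^ (-(1/2):ℝ) := by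
    apply intervalIntegral.integral_congr
    intro x _
    have : x ^ (4:ℝ) = x ^ (4:ℕ) := by
      rw [show (4:ℝ) = ((4:ℕ):ℝ) by norm_num, Real.rpow_natCast]
    simp only [this]
  rw [h1, lemni_subst_eq, intervalIntegral.integral_const_mul, lemni_beta_value]
  ring


end

/-- Corollary 3.9 (product formula for the lemniscate constant `ϖ = π_{2,4}`):
`ϖ/2 = ∏_{n≥1} (1 - 1/(2n(4n-1)))⁻¹`. -/
theorem stmt_17 :
    Tendsto
      (fun N : ℕ => ∏ n ∈ Finset.Icc 1 N,
        (1 - 1 / (2 * (n : ℝ) * (4 * (n : ℝ) - 1)))⁻¹)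
      atTop (nhds (gPi 2 4 / 2)) := by
  rw [lemni_gPi_eval]
  have hlim : Tendsto (fun N : ℕ => 2⁻¹ * Real.GammaSeq (-(1/2)) N * Real.GammaSeq (1/4) N
      / Real.GammaSeq (-(1/4)) N) atTop
      (nhds (2⁻¹ * Real.Gamma (-(1/2)) * Real.Gamma (1/4) / Real.Gamma (-(1/4)))) :=
    ((tendsto_const_nhds.mul (Real.GammaSeq_tendsto_Gamma _)).mul
      (Real.GammaSeq_tendsto_Gamma _)).div (Real.GammaSeq_tendsto_Gamma _) lemni_gamma_ne
  apply hlim.congr'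
  filter_upwards [eventually_ge_atTop 1] with N hN
  exact (lemni_prod_eq N hN).symm
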